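/- Let d > 0, α₀ ∈ ℝ with α₀d/π ∉ ℤ∖{0}, and let the transverse eigenvalues be μ₀² < μ₁² < μ₂² < ⋯ with μ_j = πj/d for j ≥ 2 and {μ₀, μ₁} = {|α₀| ∧ π/d, |α₀| ∨ π/d} as in the threshold formula. Then the numbers μ_j² are pairwise distinct and all real, and μ_j → ∞; in particular the spectrum {μ_j²}_{j≥0} of the non-self-adjoint Robin operator −Δ^I_{α₀} is real and discrete with all eigenvalues simple. -/

import Mathlib

open Filter

/-- under the non-degeneracy hypothesis `α₀ d/π ∉ ℤ∖{0}`, the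
transverse eigenvalues `μ_j²` (with `μ₀, μ₁` the two values `α₀, π/d` ordered
by the threshold rule, and `μ_j = πj/d` for `j ≥ 2`) are pairwise distinct real
numbers and `μ_j → ∞`; in particular the spectrum `{μ_j²}` of the Robin
operator is real and discrete with all eigenvalues simple. -/
theorem stmt17 (d : ℝ) (hd : 0 < d) (α₀ : ℝ)
    (hyp : ∀ n : ℤ, n ≠ 0 → α₀ * d / Real.pi ≠ (n : ℝ)) :
    let μ : ℕ → ℝ := fun j =>
      if j = 0 then (if |α₀| ≤ Real.pi / d then α₀ else Real.pi / d)
      else if j = 1 then (if |α₀| ≤ Real.pi / d then Real.pi / d else α₀)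
      else Real.pi * j / d
    Function.Injective (fun j : ℕ => (μ j) ^ 2) ∧
    Tendsto (fun j : ℕ => (μ j) ^ 2) atTop atTop := by
  intro μ
  have hπ : 0 < Real.pi := Real.pi_pos
  have hπd : 0 < Real.pi / d := div_pos hπ hd
  -- |α₀| ≠ π k / d for k ≥ 1
  have habs : ∀ k : ℕ, 1 ≤ k → |α₀| ≠ Real.pi * k / d := by
    intro k hk h
    rcases abs_eq (by positivity : (0:ℝ) ≤ Real.pi * k / d) |>.mp h with h' | h'
    · refine hyp k (by exact_mod_cast Nat.one_le_iff_ne_zero.mp hk) ?_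
      rw [h']; push_cast; field_simp
    · refine hyp (-k) (by simp; exact Nat.one_le_iff_ne_zero.mp hk) ?_
      rw [h']; push_cast; field_simp
  have hne : ∀ k : ℕ, 1 ≤ k → α₀ ^ 2 ≠ (Real.pi * k / d) ^ 2 := by
    intro k hk h
    have := (sq_eq_sq_iff_abs_eq_abs α₀ (Real.pi * k / d)).mp h
    rw [abs_of_nonneg (by positivity : (0:ℝ) ≤ Real.pi * k / d)] at this
    exact habs k hk this
  -- injectivity among the pure Dirichlet values
  have hg : ∀ a b : ℕ, (Real.pi * a / d) ^ 2 = (Real.pi * b / d) ^ 2 → a = b := by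
    intro a b h
    have h' := (sq_eq_sq_iff_abs_eq_abs _ _).mp h
    rw [abs_of_nonneg (by positivity), abs_of_nonneg (by positivity)] at h'
    have : (a : ℝ) = b := by
      field_simp at h'
      linarith
    exact_mod_cast this
  have hμ2 : ∀ j : ℕ, 2 ≤ j → μ j = Real.pi * j / d := by
    intro j hj
    simp only [μ]
    rw [if_neg (by omega), if_neg (by omega)]
  have hμ0μ1 : (μ 0) ^ 2 ≠ (μ 1) ^ 2 := by
    simp only [μ]
    norm_num
    split_ifs with h
    · -- α₀² ≠ (π/d)²
      intro hc
      have h1 : Real.pi / d = Real.pi * (1:ℕ) / d := by push_cast; ring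
      exact hne 1 le_rfl (by rw [← h1]; exact hc)
    · intro hc
      have h1 : Real.pi / d = Real.pi * (1:ℕ) / d := by push_cast; ring
      exact hne 1 le_rfl (by rw [← h1]; exact hc.symm)
  have hμ01 : ∀ i : ℕ, i ≤ 1 → (μ i) ^ 2 = α₀ ^ 2 ∨ (μ i) ^ 2 = (Real.pi * (1:ℕ) / d) ^ 2 := by
    intro i hi
    have h1 : Real.pi * (1:ℕ) / d = Real.pi / d := by push_cast; ring
    by_cases hc : |α₀| ≤ Real.pi / d
    · interval_cases i
      · left; simp only [μ]; norm_num [hc]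
      · right; simp only [μ]; norm_num [hc]
    · interval_cases i
      · right; simp only [μ]; norm_num [hc]
      · left; simp only [μ]; norm_num [hc]
  have key : ∀ i j : ℕ, i ≤ 1 → 2 ≤ j → (μ i) ^ 2 ≠ (μ j) ^ 2 := by
    intro i j hi hj hc
    rw [hμ2 j hj] at hc
    rcases hμ01 i hi with h | h
    · rw [h] at hc; exact hne j (by omega) hc
    · rw [h] at hc; have := hg 1 j hc; omega
  constructor
  · intro i j h
    simp only at h
    rcases Nat.lt_or_ge i 2 with hi | hi <;> rcases Nat.lt_or_ge j 2 with hj | hj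
    · -- both small
      interval_cases i <;> interval_cases j <;> first
        | rfl
        | exact absurd h hμ0μ1
        | exact absurd h.symm hμ0μ1
    · exact absurd h (key i j (by omega) hj)
    · exact absurd h.symm (key j i (by omega) hi)
    · rw [hμ2 i hi, hμ2 j hj] at h; exact hg i j h
  · have h1 : Tendsto (fun j : ℕ => Real.pi * j / d) atTop atTop := by
      have : Tendsto (fun j : ℕ => (Real.pi / d) * j) atTop atTop :=
        Tendsto.const_mul_atTop hπd tendsto_natCast_atTop_atTop
      exact this.congr (fun j => by ring)
    have hbase : Tendsto (fun j : ℕ => (Real.pi * j / d) ^ 2) atTop atTop :=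
      (tendsto_pow_atTop (two_ne_zero)).comp h1
    refine Tendsto.congr' ?_ hbase
    filter_upwards [eventually_ge_atTop 2] with j hj
    rw [hμ2 j hj]
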